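/- The category Sys of components and component morphisms (over a colimit-preserving sentence functor Sen) is cocomplete, and the forgetful functor U : Sys → Sig = Set³ preserves colimits. -/

import Mathlib

open CategoryTheory

/-- A component over a sentence functor `Sen`. -/
structure Component (Sen : Type ⥤ Type) where
  P : Type
  A : Type
  E : Type
  pres : A → Set (Sen.obj P)
  desc : A → Set (Sen.obj P)
  obs : E → Set A

/-- A component morphism. -/
structure CompHom {Sen : Type ⥤ Type} (C₁ C₂ : Component Sen) where
  σP : C₁.P → C₂.P
  σA : C₁.A → C₂.A
  σE : C₁.E → C₂.E
  hpres : ∀ a, Sen.map (TypeCat.ofHom σP) '' C₁.pres a ⊆ C₂.pres (σA a)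
  hdesc : ∀ a, Sen.map (TypeCat.ofHom σP) '' C₁.desc a ⊆ C₂.desc (σA a)
  hobs : ∀ e, σA '' C₁.obs e ⊆ C₂.obs (σE e)

@[ext] theorem CompHom.ext' {Sen : Type ⥤ Type} {C₁ C₂ : Component Sen}
    {f g : CompHom C₁ C₂} (h1 : f.σP = g.σP) (h2 : f.σA = g.σA) (h3 : f.σE = g.σE) :
    f = g := by
  cases f; cases g; simp_all

def CompHom.id {Sen : Type ⥤ Type} (C : Component Sen) : CompHom C C where
  σP := _root_.id
  σA := _root_.id
  σE := _root_.id
  hpres := by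
    intro a x hx
    obtain ⟨y, hy, rfl⟩ := hx
    have : Sen.map (TypeCat.ofHom (_root_.id : C.P → C.P)) y = y :=
        congrArg (fun (k : Sen.obj C.P ⟶ Sen.obj C.P) => k y) (Sen.map_id C.P)
    rwa [this]
  hdesc := by
    intro a x hx
    obtain ⟨y, hy, rfl⟩ := hx
    have : Sen.map (TypeCat.ofHom (_root_.id : C.P → C.P)) y = y :=
        congrArg (fun (k : Sen.obj C.P ⟶ Sen.obj C.P) => k y) (Sen.map_id C.P)
    rwa [this]
  hobs := by intro e x hx; simpa using hx

def CompHom.comp {Sen : Type ⥤ Type} {C₁ C₂ C₃ : Component Sen}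
    (f : CompHom C₁ C₂) (g : CompHom C₂ C₃) : CompHom C₁ C₃ where
  σP := g.σP ∘ f.σP
  σA := g.σA ∘ f.σA
  σE := g.σE ∘ f.σE
  hpres := by
    intro a x hx
    obtain ⟨y, hy, rfl⟩ := hx
    have hmap : Sen.map (TypeCat.ofHom (g.σP ∘ f.σP)) y
          = Sen.map (TypeCat.ofHom g.σP) (Sen.map (TypeCat.ofHom f.σP) y) :=
      congrArg (fun (k : Sen.obj C₁.P ⟶ Sen.obj C₃.P) => k y)
        (Sen.map_comp (X := C₁.P) (Y := C₂.P) (Z := C₃.P) (TypeCat.ofHom f.σP) (TypeCat.ofHom g.σP))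
    rw [hmap]
    exact g.hpres (f.σA a) ⟨_, f.hpres a ⟨y, hy, rfl⟩, rfl⟩
  hdesc := by
    intro a x hx
    obtain ⟨y, hy, rfl⟩ := hx
    have hmap : Sen.map (TypeCat.ofHom (g.σP ∘ f.σP)) y
          = Sen.map (TypeCat.ofHom g.σP) (Sen.map (TypeCat.ofHom f.σP) y) :=
      congrArg (fun (k : Sen.obj C₁.P ⟶ Sen.obj C₃.P) => k y)
        (Sen.map_comp (X := C₁.P) (Y := C₂.P) (Z := C₃.P) (TypeCat.ofHom f.σP) (TypeCat.ofHom g.σP))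
    rw [hmap]
    exact g.hdesc (f.σA a) ⟨_, f.hdesc a ⟨y, hy, rfl⟩, rfl⟩
  hobs := by
    intro e x hx
    obtain ⟨y, hy, rfl⟩ := hx
    exact g.hobs (f.σE e) ⟨_, f.hobs e ⟨y, hy, rfl⟩, rfl⟩

instance Sys.category (Sen : Type ⥤ Type) : Category (Component Sen) where
  Hom := CompHom
  id := CompHom.id
  comp := CompHom.comp
  id_comp := by intros; rfl
  comp_id := by intros; rfl
  assoc := by intros; rfl

open Limits

/-- The forgetful functor `U : Sys → Sig = Set³`. -/
def U (Sen : Type ⥤ Type) : Component Sen ⥤ Type × Type × Type where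
  obj C := (C.P, C.A, C.E)
  map f := (TypeCat.ofHom f.σP, TypeCat.ofHom f.σA, TypeCat.ofHom f.σE)
  map_id := by intros; rfl
  map_comp := by intros; rfl


section Aux

open Limits

variable (Sen : Type ⥤ Type)

variable {J : Type} [SmallCategory J] (F : J ⥤ Component Sen)

/-- The `P`-components of a diagram. -/
def diagP : J ⥤ Type where
  obj j := (F.obj j).P
  map f := TypeCat.ofHom (F.map f).σP
  map_id j := congrArg (fun g => TypeCat.ofHom (CompHom.σP g)) (F.map_id j)
  map_comp f g := congrArg (fun g => TypeCat.ofHom (CompHom.σP g)) (F.map_comp f g)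

/-- The `A`-components of a diagram. -/
def diagA : J ⥤ Type where
  obj j := (F.obj j).A
  map f := TypeCat.ofHom (F.map f).σA
  map_id j := congrArg (fun g => TypeCat.ofHom (CompHom.σA g)) (F.map_id j)
  map_comp f g := congrArg (fun g => TypeCat.ofHom (CompHom.σA g)) (F.map_comp f g)

/-- The `E`-components of a diagram. -/
def diagE : J ⥤ Type where
  obj j := (F.obj j).E
  map f := TypeCat.ofHom (F.map f).σE
  map_id j := congrArg (fun g => TypeCat.ofHom (CompHom.σE g)) (F.map_id j)
  map_comp f g := congrArg (fun g => TypeCat.ofHom (CompHom.σE g)) (F.map_comp f g)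

/-- The colimit component. -/
noncomputable def colimCompObj : Component Sen where
  P := colimit (diagP Sen F)
  A := colimit (diagA Sen F)
  E := colimit (diagE Sen F)
  pres a := {x | ∃ j aj, colimit.ι (diagA Sen F) j aj = a ∧
    x ∈ Sen.map (colimit.ι (diagP Sen F) j) '' (F.obj j).pres aj}
  desc a := {x | ∃ j aj, colimit.ι (diagA Sen F) j aj = a ∧
    x ∈ Sen.map (colimit.ι (diagP Sen F) j) '' (F.obj j).desc aj}
  obs e := {a | ∃ j ej, colimit.ι (diagE Sen F) j ej = e ∧
    a ∈ colimit.ι (diagA Sen F) j '' (F.obj j).obs ej}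

/-- The colimit cocone. -/
noncomputable def colimCompCocone : Cocone F where
  pt := colimCompObj Sen F
  ι :=
    { app := fun j =>
        { σP := ⇑(colimit.ι (diagP Sen F) j)
          σA := ⇑(colimit.ι (diagA Sen F) j)
          σE := ⇑(colimit.ι (diagE Sen F) j)
          hpres := fun a x hx => ⟨j, a, rfl, hx⟩
          hdesc := fun a x hx => ⟨j, a, rfl, hx⟩
          hobs := fun e a ha => ⟨j, e, rfl, ha⟩ }
      naturality := by
        intro j j' f
        apply CompHom.ext'
        · exact funext fun x => ConcreteCategory.congr_hom (colimit.w (diagP Sen F) f) x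
        · exact funext fun x => ConcreteCategory.congr_hom (colimit.w (diagA Sen F) f) x
        · exact funext fun x => ConcreteCategory.congr_hom (colimit.w (diagE Sen F) f) x }

variable {Sen F}

/-- Cocone on `P`-components induced by a cocone in `Sys`. -/
def coconeP (s : Cocone F) : Cocone (diagP Sen F) where
  pt := s.pt.P
  ι :=
    { app := fun j => TypeCat.ofHom (s.ι.app j).σP
      naturality := fun j j' f => congrArg (fun g => TypeCat.ofHom (CompHom.σP g)) (s.ι.naturality f) }

/-- Cocone on `A`-components induced by a cocone in `Sys`. -/
def coconeA (s : Cocone F) : Cocone (diagA Sen F) where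
  pt := s.pt.A
  ι :=
    { app := fun j => TypeCat.ofHom (s.ι.app j).σA
      naturality := fun j j' f => congrArg (fun g => TypeCat.ofHom (CompHom.σA g)) (s.ι.naturality f) }

/-- Cocone on `E`-components induced by a cocone in `Sys`. -/
def coconeE (s : Cocone F) : Cocone (diagE Sen F) where
  pt := s.pt.E
  ι :=
    { app := fun j => TypeCat.ofHom (s.ι.app j).σE
      naturality := fun j j' f => congrArg (fun g => TypeCat.ofHom (CompHom.σE g)) (s.ι.naturality f) }

variable (Sen F)

/-- The colimit cocone is a colimit. -/
noncomputable def colimCompIsColimit : IsColimit (colimCompCocone Sen F) where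
  desc s :=
    { σP := ⇑(colimit.desc (diagP Sen F) (coconeP s))
      σA := ⇑(colimit.desc (diagA Sen F) (coconeA s))
      σE := ⇑(colimit.desc (diagE Sen F) (coconeE s))
      hpres := by
        rintro a x ⟨w, ⟨j, aj, rfl, y, hy, rfl⟩, rfl⟩
        have hA : colimit.desc (diagA Sen F) (coconeA s) (colimit.ι (diagA Sen F) j aj)
            = (s.ι.app j).σA aj :=
          ConcreteCategory.congr_hom (colimit.ι_desc (coconeA s) j) aj
        have hP : Sen.map (colimit.desc (diagP Sen F) (coconeP s))
            (Sen.map (colimit.ι (diagP Sen F) j) y) = Sen.map (TypeCat.ofHom (s.ι.app j).σP) y := by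
          rw [← types_comp_apply (Sen.map (colimit.ι (diagP Sen F) j))
            (Sen.map (colimit.desc (diagP Sen F) (coconeP s))), ← Sen.map_comp,
            colimit.ι_desc]
          rfl
        have key := (s.ι.app j).hpres aj ⟨y, hy, rfl⟩
        rw [← hP, ← hA] at key
        exact key
      hdesc := by
        rintro a x ⟨w, ⟨j, aj, rfl, y, hy, rfl⟩, rfl⟩
        have hA : colimit.desc (diagA Sen F) (coconeA s) (colimit.ι (diagA Sen F) j aj)
            = (s.ι.app j).σA aj :=
          ConcreteCategory.congr_hom (colimit.ι_desc (coconeA s) j) aj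
        have hP : Sen.map (colimit.desc (diagP Sen F) (coconeP s))
            (Sen.map (colimit.ι (diagP Sen F) j) y) = Sen.map (TypeCat.ofHom (s.ι.app j).σP) y := by
          rw [← types_comp_apply (Sen.map (colimit.ι (diagP Sen F) j))
            (Sen.map (colimit.desc (diagP Sen F) (coconeP s))), ← Sen.map_comp,
            colimit.ι_desc]
          rfl
        have key := (s.ι.app j).hdesc aj ⟨y, hy, rfl⟩
        rw [← hP, ← hA] at key
        exact key
      hobs := by
        rintro e a ⟨w, ⟨j, ej, rfl, aj, haj, rfl⟩, rfl⟩
        have hE : colimit.desc (diagE Sen F) (coconeE s) (colimit.ι (diagE Sen F) j ej)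
            = (s.ι.app j).σE ej :=
          ConcreteCategory.congr_hom (colimit.ι_desc (coconeE s) j) ej
        have hA : colimit.desc (diagA Sen F) (coconeA s) (colimit.ι (diagA Sen F) j aj)
            = (s.ι.app j).σA aj :=
          ConcreteCategory.congr_hom (colimit.ι_desc (coconeA s) j) aj
        show colimit.desc (diagA Sen F) (coconeA s) _ ∈ _
        rw [hA, hE]
        exact (s.ι.app j).hobs ej ⟨aj, haj, rfl⟩ }
  fac s j := by
    apply CompHom.ext'
    · exact funext fun x => ConcreteCategory.congr_hom (colimit.ι_desc (coconeP s) j) x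
    · exact funext fun x => ConcreteCategory.congr_hom (colimit.ι_desc (coconeA s) j) x
    · exact funext fun x => ConcreteCategory.congr_hom (colimit.ι_desc (coconeE s) j) x
  uniq s m hm := by
    apply CompHom.ext'
    · refine congrArg (fun g : colimit (diagP Sen F) ⟶ s.pt.P => (g : colimit (diagP Sen F) → s.pt.P)) (colimit.hom_ext (F := diagP Sen F) (f := TypeCat.ofHom m.σP)
        (f' := colimit.desc (diagP Sen F) (coconeP s)) fun j => ?_)
      exact (congrArg (fun g => TypeCat.ofHom (CompHom.σP g)) (hm j)).trans (colimit.ι_desc (coconeP s) j).symm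
    · refine congrArg (fun g : colimit (diagA Sen F) ⟶ s.pt.A => (g : colimit (diagA Sen F) → s.pt.A)) (colimit.hom_ext (F := diagA Sen F) (f := TypeCat.ofHom m.σA)
        (f' := colimit.desc (diagA Sen F) (coconeA s)) fun j => ?_)
      exact (congrArg (fun g => TypeCat.ofHom (CompHom.σA g)) (hm j)).trans (colimit.ι_desc (coconeA s) j).symm
    · refine congrArg (fun g : colimit (diagE Sen F) ⟶ s.pt.E => (g : colimit (diagE Sen F) → s.pt.E)) (colimit.hom_ext (F := diagE Sen F) (f := TypeCat.ofHom m.σE)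
        (f' := colimit.desc (diagE Sen F) (coconeE s)) fun j => ?_)
      exact (congrArg (fun g => TypeCat.ofHom (CompHom.σE g)) (hm j)).trans (colimit.ι_desc (coconeE s) j).symm

variable {Sen F}

/-- Cocones for the components of a cocone over `F ⋙ U Sen`. -/
def coconeUP (t : Cocone (F ⋙ U Sen)) : Cocone (diagP Sen F) where
  pt := t.pt.1
  ι :=
    { app := fun j => (t.ι.app j).1
      naturality := fun j j' f => congrArg Prod.fst (t.ι.naturality f) }

def coconeUA (t : Cocone (F ⋙ U Sen)) : Cocone (diagA Sen F) where
  pt := t.pt.2.1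
  ι :=
    { app := fun j => (t.ι.app j).2.1
      naturality := fun j j' f => congrArg (fun p => p.2.1) (t.ι.naturality f) }

def coconeUE (t : Cocone (F ⋙ U Sen)) : Cocone (diagE Sen F) where
  pt := t.pt.2.2
  ι :=
    { app := fun j => (t.ι.app j).2.2
      naturality := fun j j' f => congrArg (fun p => p.2.2) (t.ι.naturality f) }

variable (Sen F)

/-- `U` maps the colimit cocone to a colimit cocone. -/
noncomputable def mappedIsColimit : IsColimit ((U Sen).mapCocone (colimCompCocone Sen F)) where
  desc t :=
    (colimit.desc (diagP Sen F) (coconeUP t),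
     colimit.desc (diagA Sen F) (coconeUA t),
     colimit.desc (diagE Sen F) (coconeUE t))
  fac t j := by
    refine Prod.ext ?_ (Prod.ext ?_ ?_)
    · exact colimit.ι_desc (coconeUP t) j
    · exact colimit.ι_desc (coconeUA t) j
    · exact colimit.ι_desc (coconeUE t) j
  uniq t m hm := by
    refine Prod.ext ?_ (Prod.ext ?_ ?_)
    · refine colimit.hom_ext fun j => ?_
      exact (congrArg Prod.fst (hm j)).trans (colimit.ι_desc (coconeUP t) j).symm
    · refine colimit.hom_ext fun j => ?_
      exact (congrArg (fun p => p.2.1) (hm j)).trans (colimit.ι_desc (coconeUA t) j).symm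
    · refine colimit.hom_ext fun j => ?_
      exact (congrArg (fun p => p.2.2) (hm j)).trans (colimit.ι_desc (coconeUE t) j).symm

end Aux

/-- the category `Sys` of components over a colimit-preserving
sentence functor `Sen` is cocomplete, and the forgetful functor
`U : Sys → Sig = Set³` preserves colimits. -/
theorem sys_cocomplete_and_U_preserves_colimits (Sen : Type ⥤ Type)
    [PreservesColimits Sen] :
    HasColimits (Component Sen) ∧ Nonempty (PreservesColimits (U Sen)) := by
  refine ⟨⟨fun {J} {_} => ⟨fun F => HasColimit.mk ⟨_, colimCompIsColimit Sen F⟩⟩⟩,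
    ⟨⟨fun {J} {_} => ⟨fun {F} =>
      preservesColimit_of_preserves_colimit_cocone (colimCompIsColimit Sen F)
        (mappedIsColimit Sen F)⟩⟩⟩⟩
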